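/- Let 0 < δ < 1/5, L ∈ ℕ and ω ∈ Γ(L,δ); write b₊ := T_b⁺(L) and b₋ := T_b⁻(L), and assume P_ω(τ(b₊) < τ(b₋)) ≥ 1/2. Then for every integer n ≥ exp(3δL) one has P_ω(τ(b₊) ≤ 2n/3, τ(b₊) < τ(b₋)) ≥ 1/2 − 6 · L⁴ · exp(−δL). -/

import Mathlib

open MeasureTheory ProbabilityTheory Filter Set Classical

noncomputable section

/-- An environment is a function assigning to each site `x : ℤ` the probability `ω x`
of jumping to the right. -/
abbrev Env := ℤ → ℝ

/-- `ρ_i = (1 - ω_i)/ω_i`. -/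
def rho (ω : Env) (i : ℤ) : ℝ := (1 - ω i) / ω i

/-- One-step transition probabilities of the RWRE in environment `ω`. -/
def step (ω : Env) (y z : ℤ) : ℝ :=
  if z = y + 1 then ω y else if z = y - 1 then 1 - ω y else 0

/-- `n`-step transition probabilities of a nearest-neighbour Markov chain on `ℤ`
with one-step transition probabilities `K`. -/
def probAux (K : ℤ → ℤ → ℝ) : ℕ → ℤ → ℤ → ℝ
  | 0, x, y => if y = x then 1 else 0
  | n + 1, x, y => probAux K n x (y - 1) * K (y - 1) y + probAux K n x (y + 1) * K (y + 1) y

/-- `prob ω n x y = P_ω^x(X_n = y)`, the quenched `n`-step transition probability. -/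
def prob (ω : Env) (n : ℕ) (x y : ℤ) : ℝ := probAux (step ω) n x y

/-- The potential `V`. -/
def V (ω : Env) (x : ℤ) : ℝ :=
  if 0 ≤ x then ∑ i ∈ Finset.range x.toNat, Real.log (rho ω (i + 1))
  else - ∑ i ∈ Finset.range (-x).toNat, Real.log (rho ω (-(i : ℤ)))

/-- `T⁺(L)` (as a natural number). -/
def Tplus (ω : Env) (L : ℕ) : ℕ :=
  sInf {n : ℕ | (L : ℝ) ≤ V ω n - sInf (V ω '' Set.Icc (0 : ℤ) n)}

def TplusZ (ω : Env) (L : ℕ) : ℤ := (Tplus ω L : ℤ)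

/-- `T⁻(L)` (an integer `≤ 0`). -/
def TminusAux (ω : Env) (L : ℕ) : ℕ :=
  sInf {n : ℕ | (L : ℝ) ≤ V ω (-(n : ℤ)) - sInf (V ω '' Set.Icc (-(n : ℤ)) 0)}

def TminusZ (ω : Env) (L : ℕ) : ℤ := -(TminusAux ω L : ℤ)

def R1plus (ω : Env) (L : ℕ) : ℝ := - sInf (V ω '' Set.Icc (0 : ℤ) (Tplus ω L : ℤ))

def R1minus (ω : Env) (L : ℕ) : ℝ := - sInf (V ω '' Set.Icc (TminusZ ω L) 0)

/-- `T_b⁺(L)` (as a natural number). -/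
def Tbplus (ω : Env) (L : ℕ) : ℕ := sInf {n : ℕ | V ω n = - R1plus ω L}

def TbplusZ (ω : Env) (L : ℕ) : ℤ := (Tbplus ω L : ℤ)

def TbminusAux (ω : Env) (L : ℕ) : ℕ := sInf {n : ℕ | V ω (-(n : ℤ)) = - R1minus ω L}

def TbminusZ (ω : Env) (L : ℕ) : ℤ := -(TbminusAux ω L : ℤ)

def R2plus (ω : Env) (L : ℕ) : ℝ := sSup (V ω '' Set.Icc (0 : ℤ) (TbplusZ ω L))

def R2minus (ω : Env) (L : ℕ) : ℝ := sSup (V ω '' Set.Icc (TbminusZ ω L) 0)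

/-- The set `Γ⁺(L,δ)` of environments. -/
def GammaPlus (L : ℕ) (δ : ℝ) : Set Env :=
  {ω | R1plus ω L ≤ δ * L ∧ R2plus ω L ≤ δ * L ∧ Tplus ω L ≤ L ^ 2}

/-- The set `Γ⁻(L,δ)` of environments. -/
def GammaMinus (L : ℕ) (δ : ℝ) : Set Env :=
  {ω | R1minus ω L ≤ δ * L ∧ R2minus ω L ≤ δ * L ∧ TminusAux ω L ≤ L ^ 2}

/-- The set `Γ(L,δ) = Γ⁺(L,δ) ∩ Γ⁻(L,δ)` of environments. -/
def Gamma (L : ℕ) (δ : ℝ) : Set Env := GammaPlus L δ ∩ GammaMinus L δ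

/-- The reversible measure `μ_ω(x) = e^{-V(x)} + e^{-V(x-1)}`. -/
def mu (ω : Env) (x : ℤ) : ℝ := Real.exp (-V ω x) + Real.exp (-V ω (x - 1))

/-- One-step transition probabilities of the walk reflected at `a` (below) and `b` (above). -/
def stepR (ω : Env) (a b : ℤ) (y z : ℤ) : ℝ :=
  if y = a then (if z = y + 1 then 1 else 0)
  else if y = b then (if z = y - 1 then 1 else 0)
  else step ω y z

/-- `n`-step transition probabilities of the reflected walk. -/
def probR (ω : Env) (a b : ℤ) (n : ℕ) (x y : ℤ) : ℝ := probAux (stepR ω a b) n x y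

/-- `μ` is the law of the Markov chain on `S` started at `x` with one-step transition
probabilities `K`, characterized by its values on cylinder sets. -/
def IsMarkovLaw {S : Type*} [MeasurableSpace S] (K : S → S → ℝ) (x : S)
    (μ : Measure (ℕ → S)) : Prop :=
  IsProbabilityMeasure μ ∧
    ∀ (n : ℕ) (p : ℕ → S),
      μ {X | ∀ i ≤ n, X i = p i} =
        (if p 0 = x then 1 else 0) *
          ∏ i ∈ Finset.range n, ENNReal.ofReal (K (p i) (p (i + 1)))

/-- `μ` is the quenched law `P_ω^x` of the RWRE, as a measure on path space. -/
def IsQuenchedLaw (ω : Env) (x : ℤ) (μ : Measure (ℕ → ℤ)) : Prop :=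
  IsMarkovLaw (step ω) x μ

/-- First hitting time `τ(x)` of a path, with value `⊤` if `x` is never visited. -/
def hit (x : ℤ) (X : ℕ → ℤ) : ℕ∞ := sInf ((↑) '' {n : ℕ | X n = x})

/-- The standing assumptions on the law `𝐏` of the environment, with ellipticity
constant `ε`: `𝐏` is a probability measure, the coordinates `(ω_x)_{x ∈ ℤ}` are i.i.d.,
`0 < ε < 1/2` and `𝐏(ε ≤ ω_0 ≤ 1 - ε) = 1`, `𝐄[log ρ_0] = 0`, and `Var(log ρ_0) > 0`. -/
def Standing (P : Measure Env) (ε : ℝ) : Prop :=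
  IsProbabilityMeasure P ∧
    iIndepFun (fun x ω => ω x) P ∧
    (∀ x : ℤ, P.map (fun ω => ω x) = P.map (fun ω => ω 0)) ∧
    0 < ε ∧ ε < 1 / 2 ∧
    (∀ᵐ ω ∂P, ε ≤ ω 0 ∧ ω 0 ≤ 1 - ε) ∧
    (∫ ω, Real.log (rho ω 0) ∂P) = 0 ∧
    0 < variance (fun ω => Real.log (rho ω 0)) P


namespace RWREAux

open scoped ENNReal

lemma Icc_eq_insert_top {a b : ℤ} (h : a ≤ b) :
    Finset.Icc a b = insert b (Finset.Icc a (b-1)) := by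
  ext x; simp only [Finset.mem_Icc, Finset.mem_insert]; omega

lemma Icc_eq_insert_bot {a b : ℤ} (h : a ≤ b) :
    Finset.Icc a b = insert a (Finset.Icc (a+1) b) := by
  ext x; simp only [Finset.mem_Icc, Finset.mem_insert]; omega

def pprod (K : ℤ → ℤ → ℝ) (N : ℕ) (q : Fin (N+1) → ℤ) : ℝ≥0∞ :=
  ∏ i : Fin N, ENNReal.ofReal (K (q i.castSucc) (q i.succ))

def wt (K : ℤ → ℤ → ℝ) (N : ℕ) (q : Fin (N+1) → ℤ) : ℝ≥0∞ :=
  (if q 0 = 0 then 1 else 0) * pprod K N q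

def GG (K : ℤ → ℤ → ℝ) (f : ℤ → ℝ) (N : ℕ) : ℝ≥0∞ :=
  ∑' q : Fin (N+1) → ℤ, wt K N q * ENNReal.ofReal (f (q (Fin.last N)) + (N : ℝ))

def snocEquiv (N : ℕ) : ((Fin (N+1) → ℤ) × ℤ) ≃ (Fin (N+2) → ℤ) where
  toFun x := Fin.snoc x.1 x.2
  invFun p := (Fin.init p, p (Fin.last (N+1)))
  left_inv x := by
    obtain ⟨q, z⟩ := x
    simp [Fin.init_snoc]
  right_inv p := by simp [Fin.snoc_init_self]

lemma snoc_zero_app (N : ℕ) (q : Fin (N+1) → ℤ) (z : ℤ) :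
    Fin.snoc (α := fun _ => ℤ) q z 0 = q 0 := by
  rw [← Fin.castSucc_zero, Fin.snoc_castSucc]

lemma pprod_snoc (K : ℤ → ℤ → ℝ) (N : ℕ) (q : Fin (N+1) → ℤ) (z : ℤ) :
    pprod K (N+1) (Fin.snoc q z) =
      pprod K N q * ENNReal.ofReal (K (q (Fin.last N)) z) := by
  unfold pprod
  rw [Fin.prod_univ_castSucc]
  congr 1
  · refine Finset.prod_congr rfl fun i _ => ?_
    rw [Fin.succ_castSucc, Fin.snoc_castSucc, Fin.snoc_castSucc]
  · rw [Fin.succ_last, Fin.snoc_last, Fin.snoc_castSucc]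

lemma last_mem {K : ℤ → ℤ → ℝ} {bm bp : ℤ} (hm : bm ≤ 0) (hp : 0 ≤ bp)
    (hker : ∀ w z, K w z ≠ 0 → (w ≠ bm ∧ w ≠ bp) ∧ (z = w + 1 ∨ z = w - 1)) :
    ∀ (N : ℕ) (q : Fin (N+1) → ℤ), q 0 = 0 → pprod K N q ≠ 0 →
      bm ≤ q (Fin.last N) ∧ q (Fin.last N) ≤ bp := by
  intro N
  induction N with
  | zero =>
    intro q h0 _
    have h : Fin.last 0 = 0 := rfl
    rw [h, h0]; exact ⟨hm, hp⟩
  | succ N ih =>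
    intro q h0 hne
    rw [pprod, Fin.prod_univ_castSucc] at hne
    have h12 := mul_ne_zero_iff.mp hne
    set q' : Fin (N+1) → ℤ := fun i => q i.castSucc with hq'
    have hfac : (∏ i : Fin N,
        ENNReal.ofReal (K (q (Fin.castSucc i).castSucc) (q (Fin.castSucc i).succ)))
        = pprod K N q' := by
      refine Finset.prod_congr rfl fun i _ => ?_
      simp only [hq', Fin.succ_castSucc]
    have h1 : pprod K N q' ≠ 0 := by rw [← hfac]; exact h12.1
    have h0' : q' 0 = 0 := by simp only [hq', Fin.castSucc_zero]; exact h0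
    have hw := ih q' h0' h1
    have hKne : K (q (Fin.castSucc (Fin.last N))) (q (Fin.last (N+1))) ≠ 0 := by
      intro h
      apply h12.2
      rw [Fin.succ_last, h, ENNReal.ofReal_zero]
    obtain ⟨⟨hwm, hwp⟩, hz⟩ := hker _ _ hKne
    have hw' : bm ≤ q (Fin.castSucc (Fin.last N)) ∧ q (Fin.castSucc (Fin.last N)) ≤ bp := hw
    rcases hz with h | h <;> rw [h] <;> omega

lemma GG_zero (K : ℤ → ℤ → ℝ) (f : ℤ → ℝ) : GG K f 0 = ENNReal.ofReal (f 0) := by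
  unfold GG
  rw [← (Equiv.funUnique (Fin 1) ℤ).symm.tsum_eq]
  rw [tsum_eq_single (0:ℤ) (by intro z hz; simp [wt, pprod, Equiv.funUnique, hz])]
  simp [wt, pprod, Equiv.funUnique]

lemma GG_succ_le (K : ℤ → ℤ → ℝ) (f : ℤ → ℝ) {bm bp : ℤ} (hm : bm ≤ 0) (hp : 0 ≤ bp)
    (hker : ∀ w z, K w z ≠ 0 → (w ≠ bm ∧ w ≠ bp) ∧ (z = w + 1 ∨ z = w - 1))
    (hsup : ∀ w, bm < w → w < bp → ∀ c : ℝ, 0 ≤ c →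
      ENNReal.ofReal (K w (w+1)) * ENNReal.ofReal (f (w+1) + (c+1)) +
        ENNReal.ofReal (K w (w-1)) * ENNReal.ofReal (f (w-1) + (c+1)) ≤
        ENNReal.ofReal (f w + c))
    (N : ℕ) : GG K f (N+1) ≤ GG K f N := by
  have hrw : GG K f (N+1) = ∑' (q : Fin (N+1) → ℤ),
      wt K N q * (∑' (z : ℤ), ENNReal.ofReal (K (q (Fin.last N)) z) *
        ENNReal.ofReal (f z + ((N:ℝ)+1))) := by
    rw [GG, ← (snocEquiv N).tsum_eq, ENNReal.tsum_prod']
    refine tsum_congr fun q => ?_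
    rw [← ENNReal.tsum_mul_left]
    refine tsum_congr fun z => ?_
    simp only [snocEquiv, Equiv.coe_fn_mk, Fin.snoc_last]
    simp only [wt, pprod_snoc, snoc_zero_app]
    push_cast
    ring
  rw [hrw, GG]
  refine ENNReal.tsum_le_tsum fun q => ?_
  by_cases hw0 : wt K N q = 0
  · simp [hw0]
  · have hq0 : q 0 = 0 := by
      by_contra h
      exact hw0 (by simp [wt, h])
    have hpne : pprod K N q ≠ 0 := by
      intro h; exact hw0 (by simp [wt, h])
    obtain ⟨hw1, hw2⟩ := last_mem hm hp hker N q hq0 hpne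
    set w := q (Fin.last N) with hwdef
    have hcol : (∑' (z : ℤ), ENNReal.ofReal (K w z) * ENNReal.ofReal (f z + ((N:ℝ)+1)))
        = ENNReal.ofReal (K w (w+1)) * ENNReal.ofReal (f (w+1) + ((N:ℝ)+1))
          + ENNReal.ofReal (K w (w-1)) * ENNReal.ofReal (f (w-1) + ((N:ℝ)+1)) := by
      rw [tsum_eq_sum (s := ({w+1, w-1} : Finset ℤ)) ?_, Finset.sum_pair (by omega)]
      intro z hz
      simp only [Finset.mem_insert, Finset.mem_singleton] at hz
      push_neg at hz
      have hKz : K w z = 0 := by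
        by_contra hK
        rcases (hker w z hK).2 with h | h
        exacts [hz.1 h, hz.2 h]
      rw [hKz, ENNReal.ofReal_zero, zero_mul]
    rw [hcol]
    by_cases hbdry : w = bm ∨ w = bp
    · have hz1 : K w (w+1) = 0 := by
        by_contra hK; exact absurd hbdry (by rcases hker w (w+1) hK with ⟨⟨h1, h2⟩, _⟩; tauto)
      have hz2 : K w (w-1) = 0 := by
        by_contra hK; exact absurd hbdry (by rcases hker w (w-1) hK with ⟨⟨h1, h2⟩, _⟩; tauto)
      rw [hz1, hz2]; simp
    · push_neg at hbdry
      have h1 : bm < w := lt_of_le_of_ne hw1 (Ne.symm hbdry.1)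
      have h2 : w < bp := lt_of_le_of_ne hw2 hbdry.2
      exact mul_le_mul_right (hsup w h1 h2 (N:ℝ) (Nat.cast_nonneg N)) _

lemma GG_le (K : ℤ → ℤ → ℝ) (f : ℤ → ℝ) {bm bp : ℤ} (hm : bm ≤ 0) (hp : 0 ≤ bp)
    (hker : ∀ w z, K w z ≠ 0 → (w ≠ bm ∧ w ≠ bp) ∧ (z = w + 1 ∨ z = w - 1))
    (hsup : ∀ w, bm < w → w < bp → ∀ c : ℝ, 0 ≤ c →
      ENNReal.ofReal (K w (w+1)) * ENNReal.ofReal (f (w+1) + (c+1)) +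
        ENNReal.ofReal (K w (w-1)) * ENNReal.ofReal (f (w-1) + (c+1)) ≤
        ENNReal.ofReal (f w + c)) :
    ∀ N, GG K f N ≤ ENNReal.ofReal (f 0) := by
  intro N
  induction N with
  | zero => exact le_of_eq (GG_zero K f)
  | succ N ih => exact le_trans (GG_succ_le K f hm hp hker hsup N) ih

end RWREAux

lemma V_sub (ω : Env) (x : ℤ) : V ω x - V ω (x - 1) = Real.log (rho ω x) := by
  rcases le_or_gt 1 x with hx | hx
  · rw [V, V, if_pos (by omega : (0:ℤ) ≤ x), if_pos (by omega : (0:ℤ) ≤ x - 1)]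
    have h1 : x.toNat = (x-1).toNat + 1 := by omega
    rw [h1, Finset.sum_range_succ]
    have h2 : (((x-1).toNat : ℤ) + 1) = x := by omega
    rw [h2]
    ring
  · have hx0 : x ≤ 0 := by omega
    have hVx : V ω x = -∑ i ∈ Finset.range (-x).toNat, Real.log (rho ω (-(i:ℤ))) := by
      rcases lt_or_eq_of_le hx0 with h | h
      · rw [V, if_neg (by omega)]
      · subst h; norm_num [V]
    have hVx1 : V ω (x-1) = -∑ i ∈ Finset.range (-(x-1)).toNat, Real.log (rho ω (-(i:ℤ))) := by
      rw [V, if_neg (by omega)]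
    rw [hVx, hVx1]
    have h1 : (-(x-1)).toNat = (-x).toNat + 1 := by omega
    rw [h1, Finset.sum_range_succ]
    have h2 : (-(((-x).toNat : ℕ) : ℤ)) = x := by omega
    rw [h2]
    ring

set_option maxHeartbeats 2000000

open scoped ENNReal in
/-- **Estimate (5.5).** For `0 < δ < 1/5`, `ω ∈ Γ(L,δ)` with
`P_ω(τ(b₊) < τ(b₋)) ≥ 1/2`, and every `n ≥ exp(3δL)`:
`P_ω(τ(b₊) ≤ 2n/3, τ(b₊) < τ(b₋)) ≥ 1/2 - 6 L⁴ exp(-δL)`. -/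
theorem hitting_time_estimate (δ : ℝ) (hδ0 : 0 < δ) (hδ1 : δ < 1 / 5) (L : ℕ)
    (ω : Env) (hω : ∀ x : ℤ, 0 < ω x ∧ ω x < 1) (hΓ : ω ∈ Gamma L δ)
    (μ : Measure (ℕ → ℤ)) (hμ : IsQuenchedLaw ω 0 μ)
    (hhalf : 1 / 2 ≤ μ {X | hit (TbplusZ ω L) X < hit (TbminusZ ω L) X}) :
    ∀ n : ℕ, Real.exp (3 * δ * L) ≤ n →
      ENNReal.ofReal (1 / 2 - 6 * (L : ℝ) ^ 4 * Real.exp (-δ * L)) ≤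
        μ {X | 3 * hit (TbplusZ ω L) X ≤ 2 * (n : ℕ∞) ∧
          hit (TbplusZ ω L) X < hit (TbminusZ ω L) X} := by
  intro n hn
  classical
  obtain ⟨hprob, hcyl⟩ := hμ
  set bp : ℤ := TbplusZ ω L with hbp_def
  set bm : ℤ := TbminusZ ω L with hbm_def
  have hbp0 : (0:ℤ) ≤ bp := Int.natCast_nonneg _
  have hbm0 : bm ≤ 0 := neg_nonpos.mpr (Int.natCast_nonneg _)
  have hit_le : ∀ (x : ℤ) (X : ℕ → ℤ) (k : ℕ), X k = x → hit x X ≤ (k : ℕ∞) :=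
    fun x X k hk => sInf_le ⟨k, hk, rfl⟩
  have hX0 : μ {X : ℕ → ℤ | X 0 ≠ 0} = 0 := by
    have hcover : {X : ℕ → ℤ | X 0 ≠ 0} ⊆ ⋃ z : ℤ, {X : ℕ → ℤ | X 0 = z ∧ z ≠ 0} :=
      fun X hX => Set.mem_iUnion.mpr ⟨X 0, rfl, hX⟩
    refine le_antisymm (le_trans (measure_mono hcover) (le_trans (measure_iUnion_le _) ?_))
      (zero_le)
    have hz : ∀ z : ℤ, μ {X : ℕ → ℤ | X 0 = z ∧ z ≠ 0} = 0 := by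
      intro z
      by_cases hz0 : z = 0
      · simp [hz0]
      · have heq : {X : ℕ → ℤ | X 0 = z ∧ z ≠ 0}
            = {X : ℕ → ℤ | ∀ i ≤ 0, X i = (fun _ => z) i} := by
          ext X
          simp [Nat.le_zero, hz0]
        rw [heq, hcyl 0 (fun _ => z)]
        simp [hz0]
    simp only [hz, tsum_zero, le_refl]
  rcases hbm0.lt_or_eq with hbmneg | hbmzero
  swap
  · -- bm = 0 : contradiction with hhalf
    exfalso
    have hsub : {X : ℕ → ℤ | hit bp X < hit bm X} ⊆ {X : ℕ → ℤ | X 0 ≠ 0} := by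
      intro X hX
      by_contra h0
      simp only [Set.mem_setOf_eq, not_not] at h0
      have h1 : hit bm X ≤ (0:ℕ∞) := hit_le bm X 0 (h0.trans hbmzero.symm)
      have h2 : hit bp X < (0:ℕ∞) := lt_of_lt_of_le hX h1
      exact (show (0:ℕ∞) ≤ hit bp X from zero_le).not_gt h2
    have hB0 : μ {X : ℕ → ℤ | hit bp X < hit bm X} = 0 :=
      le_antisymm (le_trans (measure_mono hsub) hX0.le) (zero_le)
    rw [hB0] at hhalf
    simp at hhalf
  -- main case : bm < 0
  set ε : ℝ := 6 * (L:ℝ)^4 * Real.exp (-δ * L) with hε_def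
  have hε0 : 0 ≤ ε := by positivity
  set T : Set (ℕ → ℤ) :=
    {X | 3 * hit bp X ≤ 2 * (n:ℕ∞) ∧ hit bp X < hit bm X} with hT_def
  set Bad : Set (ℕ → ℤ) :=
    {X | hit bp X < hit bm X ∧ ¬ (3 * hit bp X ≤ 2 * (n:ℕ∞))} with hBad_def
  have hsplit : {X : ℕ → ℤ | hit bp X < hit bm X} ⊆ T ∪ Bad := by
    intro X hX
    by_cases hA : 3 * hit bp X ≤ 2 * (n:ℕ∞)
    · exact Or.inl ⟨hA, hX⟩
    · exact Or.inr ⟨hX, hA⟩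
  have key1 : μ {X : ℕ → ℤ | hit bp X < hit bm X} ≤ μ T + μ Bad :=
    le_trans (measure_mono hsplit) (measure_union_le T Bad)
  have hBadle : μ Bad ≤ ENNReal.ofReal ε := by
    obtain ⟨hR1p, hR2p, hTp⟩ := hΓ.1
    obtain ⟨hR1m, hR2m, hTm⟩ := hΓ.2
    rcases hbp0.lt_or_eq with hbppos | hbpzero
    swap
    · -- bp = 0 : the event Bad is contained in {X 0 ≠ 0}
      have hsub : Bad ⊆ {X : ℕ → ℤ | X 0 ≠ 0} := by
        intro X hX
        obtain ⟨h1, h2⟩ := hX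
        by_contra h0
        simp only [Set.mem_setOf_eq, not_not] at h0
        apply h2
        have h3 : hit bp X ≤ (0:ℕ∞) := hit_le bp X 0 (h0.trans hbpzero)
        have h4 : hit bp X = 0 := le_antisymm h3 (zero_le)
        rw [h4, mul_zero]
        exact zero_le
      exact le_trans (measure_mono hsub) (by rw [hX0]; exact zero_le)
    -- main case : bm < 0 < bp
    -- Step 1 : bounds on the potential on [bm, bp]
    have hfinP : (V ω '' Set.Icc (0:ℤ) (Tplus ω L : ℤ)).Finite := (Set.finite_Icc _ _).image _
    have hneP : (V ω '' Set.Icc (0:ℤ) (Tplus ω L : ℤ)).Nonempty :=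
      ⟨V ω 0, 0, Set.mem_Icc.mpr ⟨le_rfl, Int.natCast_nonneg _⟩, rfl⟩
    obtain ⟨k, hkmem, hVk⟩ := hneP.csInf_mem hfinP
    rw [Set.mem_Icc] at hkmem
    have hbpT : bp ≤ (Tplus ω L : ℤ) := by
      have hset : k.toNat ∈ {m : ℕ | V ω m = - R1plus ω L} := by
        simp only [Set.mem_setOf_eq, R1plus, neg_neg]
        rw [Int.toNat_of_nonneg hkmem.1]
        exact hVk
      have h1 : Tbplus ω L ≤ k.toNat := Nat.sInf_le hset
      have h2 : (k.toNat : ℤ) = k := Int.toNat_of_nonneg hkmem.1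
      have h3 : k ≤ (Tplus ω L : ℤ) := hkmem.2
      rw [hbp_def, TbplusZ]
      omega
    have hVlowP : ∀ x : ℤ, 0 ≤ x → x ≤ bp → -(δ*(L:ℝ)) ≤ V ω x := by
      intro x hx0 hxbp
      have hmem : V ω x ∈ V ω '' Set.Icc (0:ℤ) (Tplus ω L : ℤ) :=
        ⟨x, Set.mem_Icc.mpr ⟨hx0, le_trans hxbp hbpT⟩, rfl⟩
      have h1 := csInf_le hfinP.bddBelow hmem
      have h2 : - R1plus ω L ≤ V ω x := by
        rw [R1plus, neg_neg]; exact h1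
      linarith
    have hVhighP : ∀ x : ℤ, 0 ≤ x → x ≤ bp → V ω x ≤ δ*(L:ℝ) := by
      intro x hx0 hxbp
      have hmem : V ω x ∈ V ω '' Set.Icc (0:ℤ) bp := ⟨x, Set.mem_Icc.mpr ⟨hx0, hxbp⟩, rfl⟩
      have h1 : V ω x ≤ sSup (V ω '' Set.Icc (0:ℤ) bp) :=
        le_csSup ((Set.finite_Icc _ _).image _).bddAbove hmem
      have h2 : sSup (V ω '' Set.Icc (0:ℤ) bp) = R2plus ω L := by rw [R2plus, hbp_def]
      linarith
    have hfinM : (V ω '' Set.Icc (TminusZ ω L) 0).Finite := (Set.finite_Icc _ _).image _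
    have hneM : (V ω '' Set.Icc (TminusZ ω L) 0).Nonempty :=
      ⟨V ω 0, 0, Set.mem_Icc.mpr ⟨by rw [TminusZ]; exact neg_nonpos.mpr (Int.natCast_nonneg _),
        le_rfl⟩, rfl⟩
    obtain ⟨k', hk'mem, hVk'⟩ := hneM.csInf_mem hfinM
    rw [Set.mem_Icc] at hk'mem
    have hk'0 : k' ≤ 0 := hk'mem.2
    have hbmT : TminusZ ω L ≤ bm := by
      have hset : (-k').toNat ∈ {m : ℕ | V ω (-(m:ℤ)) = - R1minus ω L} := by
        simp only [Set.mem_setOf_eq, R1minus, neg_neg]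
        rw [Int.toNat_of_nonneg (by omega : (0:ℤ) ≤ -k'), neg_neg]
        exact hVk'
      have h1 : TbminusAux ω L ≤ (-k').toNat := Nat.sInf_le hset
      have h2 : ((-k').toNat : ℤ) = -k' := Int.toNat_of_nonneg (by omega)
      have h3 : TminusZ ω L = -(TminusAux ω L : ℤ) := rfl
      have h4 : TminusZ ω L ≤ k' := hk'mem.1
      rw [hbm_def, TbminusZ]
      omega
    have hVlowM : ∀ x : ℤ, bm ≤ x → x ≤ 0 → -(δ*(L:ℝ)) ≤ V ω x := by
      intro x h1 h2
      have hmem : V ω x ∈ V ω '' Set.Icc (TminusZ ω L) 0 :=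
        ⟨x, Set.mem_Icc.mpr ⟨le_trans hbmT h1, h2⟩, rfl⟩
      have h3 := csInf_le hfinM.bddBelow hmem
      have h4 : - R1minus ω L ≤ V ω x := by rw [R1minus, neg_neg]; exact h3
      linarith
    have hVhighM : ∀ x : ℤ, bm ≤ x → x ≤ 0 → V ω x ≤ δ*(L:ℝ) := by
      intro x h1 h2
      have hmem : V ω x ∈ V ω '' Set.Icc bm 0 := ⟨x, Set.mem_Icc.mpr ⟨h1, h2⟩, rfl⟩
      have h3 : V ω x ≤ sSup (V ω '' Set.Icc bm 0) :=
        le_csSup ((Set.finite_Icc _ _).image _).bddAbove hmem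
      have h4 : sSup (V ω '' Set.Icc bm 0) = R2minus ω L := by rw [R2minus, hbm_def]
      linarith
    have hVbound : ∀ x : ℤ, bm ≤ x → x ≤ bp → -(δ*(L:ℝ)) ≤ V ω x ∧ V ω x ≤ δ*(L:ℝ) := by
      intro x h1 h2
      rcases le_or_gt x 0 with h | h
      · exact ⟨hVlowM x h1 h, hVhighM x h1 h⟩
      · exact ⟨hVlowP x h.le h2, hVhighP x h.le h2⟩
    have hbpL : bp ≤ ((L^2 : ℕ) : ℤ) := le_trans hbpT (by exact_mod_cast hTp)
    have hbmL : -((L^2 : ℕ) : ℤ) ≤ bm := by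
      refine le_trans ?_ hbmT
      have h1 : (TminusAux ω L : ℤ) ≤ ((L^2:ℕ):ℤ) := by exact_mod_cast hTm
      have h2 : TminusZ ω L = -(TminusAux ω L : ℤ) := rfl
      omega
    -- Step 2 : the super-solution fV
    have hrhopos : ∀ x : ℤ, 0 < rho ω x :=
      fun x => div_pos (by linarith [(hω x).2]) (hω x).1
    have hexpV : ∀ x : ℤ, Real.exp (V ω x - V ω (x-1)) = rho ω x :=
      fun x => by rw [V_sub]; exact Real.exp_log (hrhopos x)
    set a : ℤ → ℝ := fun j => ∑ i ∈ Finset.Icc (bm+1) j,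
      (Real.exp (V ω j - V ω i) + Real.exp (V ω j - V ω (i-1))) with ha_def
    set fV : ℤ → ℝ := fun x => ∑ j ∈ Finset.Icc x (bp-1), a j with hf_def
    have ha_nonneg : ∀ j, 0 ≤ a j := fun j => Finset.sum_nonneg fun i _ => by positivity
    have hf_nonneg : ∀ x, 0 ≤ fV x := fun x => Finset.sum_nonneg fun j _ => ha_nonneg j
    have ha_rec : ∀ x : ℤ, bm + 1 ≤ x → a x = rho ω x * a (x-1) + (1 + rho ω x) := by
      intro x hx
      have hnotmem : x ∉ Finset.Icc (bm+1) (x-1) := by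
        simp only [Finset.mem_Icc]; omega
      rw [ha_def]
      simp only
      rw [RWREAux.Icc_eq_insert_top hx, Finset.sum_insert hnotmem]
      have hterm : Real.exp (V ω x - V ω x) + Real.exp (V ω x - V ω (x-1))
          = 1 + rho ω x := by
        rw [sub_self, Real.exp_zero, hexpV]
      have hsum : ∑ i ∈ Finset.Icc (bm+1) (x-1),
          (Real.exp (V ω x - V ω i) + Real.exp (V ω x - V ω (i-1)))
          = rho ω x * a (x-1) := by
        rw [ha_def]
        simp only
        rw [← hexpV x, Finset.mul_sum]
        refine Finset.sum_congr rfl fun i _ => ?_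
        have e1 : V ω x - V ω i = (V ω x - V ω (x-1)) + (V ω (x-1) - V ω i) := by ring
        have e2 : V ω x - V ω (i-1) = (V ω x - V ω (x-1)) + (V ω (x-1) - V ω (i-1)) := by
          ring
        rw [e1, e2, Real.exp_add, Real.exp_add]
        ring
      rw [hterm, hsum]
      ring
    have hfa : ∀ x : ℤ, x ≤ bp - 1 → fV x = a x + fV (x+1) := by
      intro x hx
      have hnotmem : x ∉ Finset.Icc (x+1) (bp-1) := by
        simp only [Finset.mem_Icc]; omega
      rw [hf_def]
      simp only
      rw [RWREAux.Icc_eq_insert_bot hx, Finset.sum_insert hnotmem]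
    have hkey : ∀ x : ℤ, bm < x → x < bp → ω x * a x - (1 - ω x) * a (x-1) = 1 := by
      intro x h1 h2
      rw [ha_rec x (by omega)]
      have h3 : ω x ≠ 0 := ne_of_gt (hω x).1
      simp only [rho]
      field_simp
      ring
    have hsuper : ∀ x : ℤ, bm < x → x < bp →
        ω x * fV (x+1) + (1 - ω x) * fV (x-1) + 1 ≤ fV x := by
      intro x h1 h2
      have e1 : fV x = a x + fV (x+1) := hfa x (by omega)
      have e2 : fV (x-1) = a (x-1) + fV ((x-1)+1) := hfa (x-1) (by omega)
      have e3 : (x-1)+1 = x := by ring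
      rw [e3] at e2
      exact le_of_eq (by linear_combination (-(ω x)) * e1 + (1 - ω x) * e2 - hkey x h1 h2)
    have hf1 : ∀ y : ℤ, bm < y → y < bp → 1 ≤ fV y := by
      intro y h1 h2
      have ha1 : 1 ≤ a y := by
        have hmem : y ∈ Finset.Icc (bm+1) y := by simp only [Finset.mem_Icc]; omega
        have hsingle : Real.exp (V ω y - V ω y) + Real.exp (V ω y - V ω (y-1)) ≤ a y := by
          rw [ha_def]
          simp only
          exact Finset.single_le_sum
            (f := fun i => Real.exp (V ω y - V ω i) + Real.exp (V ω y - V ω (i-1)))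
            (fun i _ => by positivity) hmem
        rw [sub_self, Real.exp_zero] at hsingle
        nlinarith [Real.exp_pos (V ω y - V ω (y-1))]
      have e1 : fV y = a y + fV (y+1) := hfa y (by omega)
      nlinarith [hf_nonneg (y+1)]
    -- Step 3 : bound on fV 0
    have hfb : fV 0 ≤ 4*(L:ℝ)^4 * Real.exp (2*(δ*(L:ℝ))) := by
      have haj : ∀ j ∈ Finset.Icc (0:ℤ) (bp-1),
          a j ≤ 2*(L:ℝ)^2 * (2 * Real.exp (2*(δ*(L:ℝ)))) := by
        intro j hj
        rw [Finset.mem_Icc] at hj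
        have hterm : ∀ i ∈ Finset.Icc (bm+1) j,
            Real.exp (V ω j - V ω i) + Real.exp (V ω j - V ω (i-1))
              ≤ 2 * Real.exp (2*(δ*(L:ℝ))) := by
          intro i hi
          rw [Finset.mem_Icc] at hi
          have hVj := hVbound j (by omega) (by omega)
          have hVi := hVbound i (by omega) (by omega)
          have hVi1 := hVbound (i-1) (by omega) (by omega)
          have b1 : Real.exp (V ω j - V ω i) ≤ Real.exp (2*(δ*(L:ℝ))) :=
            Real.exp_le_exp.mpr (by linarith [hVj.1, hVj.2, hVi.1, hVi.2])
          have b2 : Real.exp (V ω j - V ω (i-1)) ≤ Real.exp (2*(δ*(L:ℝ))) :=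
            Real.exp_le_exp.mpr (by linarith [hVj.1, hVj.2, hVi1.1, hVi1.2])
          linarith
        have hcard : ((Finset.Icc (bm+1) j).card : ℝ) ≤ 2*(L:ℝ)^2 := by
          rw [Int.card_Icc]
          have h1 : (j + 1 - (bm+1)).toNat ≤ 2 * L^2 := by
            have hcast : ((2 * L^2 : ℕ) : ℤ) = 2 * ((L^2 : ℕ) : ℤ) := by push_cast; ring
            rw [Int.toNat_le, hcast]
            omega
          calc ((j + 1 - (bm+1)).toNat : ℝ) ≤ ((2 * L^2 : ℕ) : ℝ) := Nat.cast_le.mpr h1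
            _ = 2*(L:ℝ)^2 := by push_cast; ring
        calc a j ≤ (Finset.Icc (bm+1) j).card • (2 * Real.exp (2*(δ*(L:ℝ)))) := by
              rw [ha_def]; simp only
              exact Finset.sum_le_card_nsmul _ _ _ hterm
          _ = ((Finset.Icc (bm+1) j).card : ℝ) * (2 * Real.exp (2*(δ*(L:ℝ)))) :=
              nsmul_eq_mul _ _
          _ ≤ 2*(L:ℝ)^2 * (2 * Real.exp (2*(δ*(L:ℝ)))) :=
              mul_le_mul_of_nonneg_right hcard (by positivity)
      have hcard0 : ((Finset.Icc (0:ℤ) (bp-1)).card : ℝ) ≤ (L:ℝ)^2 := by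
        rw [Int.card_Icc]
        have h1 : (bp - 1 + 1 - 0).toNat ≤ L^2 := by
          rw [Int.toNat_le]
          omega
        calc (((bp - 1 + 1 - 0)).toNat : ℝ) ≤ ((L^2 : ℕ) : ℝ) := Nat.cast_le.mpr h1
          _ = (L:ℝ)^2 := by push_cast; ring
      calc fV 0 ≤ (Finset.Icc (0:ℤ) (bp-1)).card • (2*(L:ℝ)^2 * (2 * Real.exp (2*(δ*(L:ℝ))))) := by
            rw [hf_def]; simp only
            exact Finset.sum_le_card_nsmul _ _ _ haj
        _ = ((Finset.Icc (0:ℤ) (bp-1)).card : ℝ) * (2*(L:ℝ)^2 * (2 * Real.exp (2*(δ*(L:ℝ))))) :=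
            nsmul_eq_mul _ _
        _ ≤ (L:ℝ)^2 * (2*(L:ℝ)^2 * (2 * Real.exp (2*(δ*(L:ℝ))))) :=
            mul_le_mul_of_nonneg_right hcard0 (by positivity)
        _ = 4*(L:ℝ)^4 * Real.exp (2*(δ*(L:ℝ))) := by ring
    -- Step 4 : the killed kernel K
    set K : ℤ → ℤ → ℝ := fun y z => if y = bm ∨ y = bp then 0 else step ω y z with hK_def
    have hker : ∀ w z : ℤ, K w z ≠ 0 → (w ≠ bm ∧ w ≠ bp) ∧ (z = w + 1 ∨ z = w - 1) := by
      intro w z hK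
      rw [hK_def] at hK
      simp only at hK
      by_cases h1 : w = bm ∨ w = bp
      · rw [if_pos h1] at hK
        exact absurd rfl hK
      · push_neg at h1
        rw [if_neg (not_or.mpr h1)] at hK
        refine ⟨h1, ?_⟩
        by_contra h2
        push_neg at h2
        apply hK
        simp only [step]
        rw [if_neg h2.1, if_neg h2.2]
    have hKp : ∀ w : ℤ, w ≠ bm → w ≠ bp → K w (w+1) = ω w := by
      intro w h1 h2
      simp [hK_def, step, h1, h2]
    have hKm : ∀ w : ℤ, w ≠ bm → w ≠ bp → K w (w-1) = 1 - ω w := by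
      intro w h1 h2
      have hne : w - 1 ≠ w + 1 := by omega
      simp [hK_def, step, h1, h2, hne]
    have hsupE : ∀ w, bm < w → w < bp → ∀ c : ℝ, 0 ≤ c →
        ENNReal.ofReal (K w (w+1)) * ENNReal.ofReal (fV (w+1) + (c+1)) +
          ENNReal.ofReal (K w (w-1)) * ENNReal.ofReal (fV (w-1) + (c+1)) ≤
          ENNReal.ofReal (fV w + c) := by
      intro w h1 h2 c hc
      rw [hKp w (by omega) (by omega), hKm w (by omega) (by omega)]
      rw [← ENNReal.ofReal_mul (hω w).1.le,
        ← ENNReal.ofReal_mul (by linarith [(hω w).2]),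
        ← ENNReal.ofReal_add
          (mul_nonneg (hω w).1.le (by linarith [hf_nonneg (w+1)]))
          (mul_nonneg (by linarith [(hω w).2]) (by linarith [hf_nonneg (w-1)]))]
      apply ENNReal.ofReal_le_ofReal
      nlinarith [hsuper w h1 h2]
    -- Step 5 : survival event bound
    set N : ℕ := 2 * n / 3 with hN_def
    set Surv : Set (ℕ → ℤ) := {X | X 0 = 0 ∧ ∀ i ≤ N, X i ≠ bm ∧ X i ≠ bp} with hSurv_def
    have hBadSub : Bad ⊆ {X : ℕ → ℤ | X 0 ≠ 0} ∪ Surv := by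
      intro X hX
      obtain ⟨hlt, hnA⟩ := hX
      by_cases h0 : X 0 = 0
      · right
        refine ⟨h0, ?_⟩
        have hne : hit bp X ≠ ⊤ := ne_top_of_lt hlt
        obtain ⟨kk, hkk⟩ := WithTop.ne_top_iff_exists.mp hne
        replace hkk : ((kk:ℕ):ℕ∞) = hit bp X := hkk
        have hk3 : ¬ (3 * kk ≤ 2 * n) := by
          intro hcon
          apply hnA
          rw [← hkk]
          calc (3:ℕ∞) * kk = ((3*kk : ℕ) : ℕ∞) := by push_cast; ring
            _ ≤ ((2*n : ℕ) : ℕ∞) := by exact_mod_cast hcon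
            _ = 2 * (n:ℕ∞) := by push_cast; ring
        have hkN : N + 1 ≤ kk := by omega
        intro i hi
        constructor
        · intro hXi
          have h1 : hit bm X ≤ (i:ℕ∞) := hit_le bm X i hXi
          have h2 : (kk:ℕ∞) < hit bm X := by rw [hkk]; exact hlt
          have h3 : (kk:ℕ∞) < (i:ℕ∞) := lt_of_lt_of_le h2 h1
          have h4 : kk < i := by exact_mod_cast h3
          omega
        · intro hXi
          have h1 : hit bp X ≤ (i:ℕ∞) := hit_le bp X i hXi
          rw [← hkk] at h1
          have h4 : kk ≤ i := by exact_mod_cast h1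
          omega
      · left; exact h0
    set extq : (Fin (N+1) → ℤ) → ℕ → ℤ :=
      fun q i => if h : i < N+1 then q ⟨i, h⟩ else 0 with hext_def
    have hSurvCover : Surv ⊆
        ⋃ q : Fin (N+1) → ℤ, (Surv ∩ {X | ∀ i ≤ N, X i = extq q i}) := by
      intro X hX
      refine Set.mem_iUnion.mpr ⟨fun j => X j, hX, fun i hi => ?_⟩
      rw [hext_def]
      simp only
      rw [dif_pos (by omega : i < N+1)]
    have hμSurv1 : μ Surv ≤
        ∑' q : Fin (N+1) → ℤ, μ (Surv ∩ {X | ∀ i ≤ N, X i = extq q i}) :=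
      le_trans (measure_mono hSurvCover) (measure_iUnion_le _)
    have hterm : ∀ q : Fin (N+1) → ℤ,
        ((N+1 : ℕ) : ℝ≥0∞) * μ (Surv ∩ {X | ∀ i ≤ N, X i = extq q i}) ≤
          RWREAux.wt K N q * ENNReal.ofReal (fV (q (Fin.last N)) + (N:ℝ)) := by
      intro q
      by_cases hgood : q 0 = 0 ∧ ∀ j : Fin (N+1), q j ≠ bm ∧ q j ≠ bp
      · have hq0 : extq q 0 = 0 := by
          rw [hext_def]
          simp only
          rw [dif_pos (Nat.succ_pos N)]
          exact hgood.1
        have hμcyl := hcyl N (extq q)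
        have hprod : (∏ i ∈ Finset.range N,
            ENNReal.ofReal (step ω (extq q i) (extq q (i+1)))) = RWREAux.pprod K N q := by
          rw [RWREAux.pprod, ← Fin.prod_univ_eq_prod_range]
          refine Finset.prod_congr rfl fun i _ => ?_
          have e1 : extq q (i : ℕ) = q i.castSucc := by
            rw [hext_def]
            simp only
            rw [dif_pos (Nat.lt_succ_of_lt i.isLt)]
            rfl
          have e2 : extq q ((i:ℕ)+1) = q i.succ := by
            rw [hext_def]
            simp only
            rw [dif_pos (Nat.succ_lt_succ i.isLt)]
            rfl
          rw [e1, e2, hK_def]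
          simp only
          rw [if_neg (not_or.mpr ⟨(hgood.2 i.castSucc).1, (hgood.2 i.castSucc).2⟩)]
        have hle1 : μ (Surv ∩ {X | ∀ i ≤ N, X i = extq q i}) ≤ RWREAux.wt K N q := by
          refine le_trans (measure_mono Set.inter_subset_right) ?_
          rw [hμcyl, hprod, RWREAux.wt, if_pos hq0, if_pos hgood.1]
        by_cases hwz : RWREAux.wt K N q = 0
        · have h0 : μ (Surv ∩ {X | ∀ i ≤ N, X i = extq q i}) = 0 :=
            le_antisymm (hwz ▸ hle1) (zero_le)
          rw [h0, mul_zero]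
          exact zero_le
        · have hpne : RWREAux.pprod K N q ≠ 0 :=
            fun h => hwz (by rw [RWREAux.wt, h, mul_zero])
          have hlast := RWREAux.last_mem hbm0 hbp0 hker N q hgood.1 hpne
          have hin1 : bm < q (Fin.last N) :=
            lt_of_le_of_ne hlast.1 (Ne.symm (hgood.2 (Fin.last N)).1)
          have hin2 : q (Fin.last N) < bp := lt_of_le_of_ne hlast.2 (hgood.2 (Fin.last N)).2
          have hfge : ((N+1 : ℕ) : ℝ≥0∞) ≤ ENNReal.ofReal (fV (q (Fin.last N)) + (N:ℝ)) := by
            rw [← ENNReal.ofReal_natCast (N+1)]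
            apply ENNReal.ofReal_le_ofReal
            push_cast
            linarith [hf1 (q (Fin.last N)) hin1 hin2]
          calc ((N+1:ℕ):ℝ≥0∞) * μ (Surv ∩ {X | ∀ i ≤ N, X i = extq q i})
              ≤ ((N+1:ℕ):ℝ≥0∞) * RWREAux.wt K N q := mul_le_mul_right hle1 _
            _ = RWREAux.wt K N q * ((N+1:ℕ):ℝ≥0∞) := mul_comm _ _
            _ ≤ RWREAux.wt K N q * ENNReal.ofReal (fV (q (Fin.last N)) + (N:ℝ)) :=
                mul_le_mul_right hfge _
      · have hempty : Surv ∩ {X | ∀ i ≤ N, X i = extq q i} = ∅ := by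
          rw [Set.eq_empty_iff_forall_notMem]
          rintro X ⟨⟨hX0', hXs⟩, hXc⟩
          apply hgood
          have hqx : ∀ j : Fin (N+1), q j = X (j : ℕ) := by
            intro j
            have h1 := hXc (j:ℕ) (Nat.lt_succ_iff.mp j.isLt)
            rw [hext_def] at h1
            simp only at h1
            rw [dif_pos j.isLt] at h1
            exact h1.symm
          constructor
          · rw [hqx 0]
            exact hX0'
          · intro j
            rw [hqx j]
            exact hXs (j:ℕ) (Nat.lt_succ_iff.mp j.isLt)
        rw [hempty, measure_empty, mul_zero]
        exact zero_le
    have hGG := RWREAux.GG_le K fV hbm0 hbp0 hker hsupE N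
    have hchain : ((N+1:ℕ):ℝ≥0∞) * μ Surv ≤ ENNReal.ofReal (fV 0) := by
      calc ((N+1:ℕ):ℝ≥0∞) * μ Surv
          ≤ ((N+1:ℕ):ℝ≥0∞) * ∑' q : Fin (N+1) → ℤ,
            μ (Surv ∩ {X | ∀ i ≤ N, X i = extq q i}) := mul_le_mul_right hμSurv1 _
        _ = ∑' q : Fin (N+1) → ℤ,
            ((N+1:ℕ):ℝ≥0∞) * μ (Surv ∩ {X | ∀ i ≤ N, X i = extq q i}) :=
            ENNReal.tsum_mul_left.symm
        _ ≤ ∑' q : Fin (N+1) → ℤ,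
            RWREAux.wt K N q * ENNReal.ofReal (fV (q (Fin.last N)) + (N:ℝ)) :=
            ENNReal.tsum_le_tsum hterm
        _ = RWREAux.GG K fV N := rfl
        _ ≤ ENNReal.ofReal (fV 0) := hGG
    -- Step 6 : numeric bound
    have hNineq : 2*n + 1 ≤ 3*(N+1) := by omega
    have hεreal : fV 0 ≤ ε * ((N+1:ℕ):ℝ) := by
      have h1 : 2*Real.exp (3*δ*(L:ℝ)) + 1 ≤ 3*((N:ℝ)+1) := by
        have h2 : ((2*n+1 : ℕ):ℝ) ≤ ((3*(N+1) : ℕ):ℝ) := Nat.cast_le.mpr hNineq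
        push_cast at h2
        linarith [hn]
      have hexpid : Real.exp (-δ*(L:ℝ)) * Real.exp (3*δ*(L:ℝ)) = Real.exp (2*(δ*(L:ℝ))) := by
        rw [← Real.exp_add]
        ring_nf
      have hL4 : (0:ℝ) ≤ (L:ℝ)^4 := by positivity
      have hu : (0:ℝ) < Real.exp (-δ*(L:ℝ)) := Real.exp_pos _
      have hkey2 : 4*(L:ℝ)^4 * Real.exp (2*(δ*(L:ℝ))) ≤ ε * ((N+1:ℕ):ℝ) := by
        have hA : (0:ℝ) ≤ 2*(L:ℝ)^4*Real.exp (-δ*(L:ℝ)) := by positivity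
        have h3 := mul_le_mul_of_nonneg_left h1 hA
        calc 4*(L:ℝ)^4 * Real.exp (2*(δ*(L:ℝ)))
            = 2*(L:ℝ)^4*Real.exp (-δ*(L:ℝ)) * (2*Real.exp (3*δ*(L:ℝ))) := by
              rw [← hexpid]; ring
          _ ≤ 2*(L:ℝ)^4*Real.exp (-δ*(L:ℝ)) * (2*Real.exp (3*δ*(L:ℝ)) + 1) := by
              nlinarith [hA]
          _ ≤ 2*(L:ℝ)^4*Real.exp (-δ*(L:ℝ)) * (3*((N:ℝ)+1)) := h3
          _ = ε * ((N+1:ℕ):ℝ) := by rw [hε_def]; push_cast; ring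
      linarith [hfb]
    have hμSurv : μ Surv ≤ ENNReal.ofReal ε := by
      have h1 : μ Surv ≤ ENNReal.ofReal (fV 0) / ((N+1:ℕ):ℝ≥0∞) := by
        rw [ENNReal.le_div_iff_mul_le
          (Or.inl (by exact_mod_cast Nat.succ_ne_zero N))
          (Or.inl (ENNReal.natCast_ne_top _))]
        rw [mul_comm]
        exact hchain
      refine le_trans h1 (ENNReal.div_le_of_le_mul ?_)
      rw [← ENNReal.ofReal_natCast (N+1), ← ENNReal.ofReal_mul hε0]
      exact ENNReal.ofReal_le_ofReal hεreal
    calc μ Bad ≤ μ ({X : ℕ → ℤ | X 0 ≠ 0} ∪ Surv) := measure_mono hBadSub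
      _ ≤ μ {X : ℕ → ℤ | X 0 ≠ 0} + μ Surv := measure_union_le _ _
      _ = μ Surv := by rw [hX0, zero_add]
      _ ≤ ENNReal.ofReal ε := hμSurv
  -- final arithmetic
  have hB2 : (1/2:ℝ≥0∞) ≤ μ T + ENNReal.ofReal ε :=
    hhalf.trans (key1.trans (add_le_add le_rfl hBadle))
  rcases le_or_gt (1/2 - ε) 0 with hle | hgt
  · rw [show (1 / 2 - 6 * (L : ℝ) ^ 4 * Real.exp (-δ * L)) = 1/2 - ε from rfl,
      ENNReal.ofReal_eq_zero.mpr hle]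
    exact zero_le
  · have h12 : ENNReal.ofReal (1/2 : ℝ) = (1/2:ℝ≥0∞) := by
      rw [show (1/2 : ℝ) = ((2:ℝ))⁻¹ by norm_num, ENNReal.ofReal_inv_of_pos (by norm_num)]
      norm_num [ENNReal.ofReal_ofNat]
    have hsum : ENNReal.ofReal (1/2 - ε) + ENNReal.ofReal ε = (1/2:ℝ≥0∞) := by
      rw [← ENNReal.ofReal_add (by linarith) hε0]
      rw [show (1/2 - ε + ε : ℝ) = 1/2 by ring, h12]
    rw [← hsum] at hB2
    exact (ENNReal.add_le_add_iff_right ENNReal.ofReal_ne_top).mp hB2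

end
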